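/- For each i ∈ {0,1}, the following two mappings are well-defined between the class H^i of λ-ho-term-graphs over Σλ^i and the class HAP^i of λ-ap-ho-term-graphs over Σλ^i: (1) A_i: H^i → HAP^i sends (V, lab, args, r, Sc) to (V, lab, args, r, P) where, for a vertex w whose set of binders other than w itself is {v₀, …, v_n} with Sc(v_n) ⊊ Sc(v_{n−1}) ⊊ … ⊊ Sc(v₀), the abstraction prefix is P(w) := v₀⋯v_n (and P(w) := ε if there are no such binders); then P is a correct abstraction-prefix function. (2) B_i: HAP^i → H^i sends (V, lab, args, r, P) to (V, lab, args, r, Sc) where Sc(v) := { w ∈ V : v occurs in P(w) } ∪ {v} for each abstraction vertex v; then Sc satisfies the scope-function conditions. -/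

import Mathlib

/-! Common framework: term graphs over a signature, homomorphisms, bisimulations,
    access paths, λ-ho-term-graphs, λ-ap-ho-term-graphs, λ-term-graphs with
    scope delimiters, and the translation constructions. -/

inductive Lab3 : Type
  | app | lam | var
  deriving DecidableEq

/-- Arity function of the signature Σλ^i = {@, λ, 0} with ar(@)=2, ar(λ)=1, ar(0)=i. -/
def ar3 (i : ℕ) : Lab3 → ℕ
  | .app => 2
  | .lam => 1
  | .var => i

inductive Lab4 : Type
  | app | lam | var | del
  deriving DecidableEq

/-- Arity function of Σλ^{i,j} = {@, λ, 0, S} with ar(@)=2, ar(λ)=1, ar(0)=i, ar(S)=j. -/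
def ar4 (i j : ℕ) : Lab4 → ℕ
  | .app => 2
  | .lam => 1
  | .var => i
  | .del => j

def lab3to4 : Lab3 → Lab4
  | .app => .app
  | .lam => .lam
  | .var => .var

def lab4to3 : Lab4 → Lab3
  | .app => .app
  | .lam => .lam
  | .var => .var
  | .del => .var

/-- A term graph over a signature: vertex labelling, argument (successor) lists of
    length matching the arity of the label, a root, and every vertex reachable
    from the root. -/
structure TermGraph (L : Type) (ar : L → ℕ) (V : Type) where
  lab : V → L
  args : V → List V
  root : V
  args_len : ∀ v, (args v).length = ar (lab v)
  reach : ∀ v, Relation.ReflTransGen (fun a b => b ∈ args a) root v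

namespace TermGraph

variable {L V : Type} {ar : L → ℕ}

/-- `G.Succ k w w'` : `w'` is the `k`-th successor of `w` (the edge w ↣_k w'). -/
def Succ (G : TermGraph L ar V) (k : ℕ) (w w' : V) : Prop :=
  (G.args w)[k]? = some w'

/-- `G.Edge w w'` : `w'` is some successor of `w` (the relation ↣). -/
def Edge (G : TermGraph L ar V) (w w' : V) : Prop :=
  w' ∈ G.args w

/-- Reachability ↠ along edges. -/
def Reaches (G : TermGraph L ar V) (w w' : V) : Prop :=
  Relation.ReflTransGen G.Edge w w'

end TermGraph

/-- Homomorphism (functional bisimulation) of term graphs. -/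
def IsHom {L V₁ V₂ : Type} {ar : L → ℕ} (h : V₁ → V₂)
    (G₁ : TermGraph L ar V₁) (G₂ : TermGraph L ar V₂) : Prop :=
  (∀ v, G₂.lab (h v) = G₁.lab v) ∧
  (∀ v, G₂.args (h v) = (G₁.args v).map h) ∧
  h G₁.root = G₂.root

/-- Bisimulation between term graphs: a term graph on a set of pairs, rooted at the
    pair of roots, whose two projections are homomorphisms. -/
def Bisim {L V₁ V₂ : Type} {ar : L → ℕ}
    (G₁ : TermGraph L ar V₁) (G₂ : TermGraph L ar V₂) : Prop :=
  ∃ (S : Set (V₁ × V₂)) (R : TermGraph L ar S),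
    (R.root : V₁ × V₂) = (G₁.root, G₂.root) ∧
    IsHom (fun x : S => x.val.1) R G₁ ∧
    IsHom (fun x : S => x.val.2) R G₂

/-- An access path of a vertex `w`: a path from the root to `w` (with edge indices)
    that visits no vertex twice. -/
structure AccessPath {L V : Type} {ar : L → ℕ} (G : TermGraph L ar V) (w : V) where
  n : ℕ
  vs : Fin (n + 1) → V
  ks : Fin n → ℕ
  start : vs 0 = G.root
  finish : vs (Fin.last n) = w
  step : ∀ m : Fin n, G.Succ (ks m) (vs m.castSucc) (vs m.succ)
  inj : Function.Injective vs

/-- The conditions (root), (self), (nest), (closed), (scope)₀ and (for i = 1) (scope)₁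
    on a scope function. -/
def ScopeConds (i : ℕ) {V : Type} (G : TermGraph Lab3 (ar3 i) V)
    (Sc : V → Set V) : Prop :=
  (∀ v, G.lab v = .lam → G.root ∉ Sc v \ {v}) ∧
  (∀ v, G.lab v = .lam → v ∈ Sc v) ∧
  (∀ v₀ v₁, G.lab v₀ = .lam → G.lab v₁ = .lam → v₁ ∈ Sc v₀ \ {v₀} →
      Sc v₁ ⊆ Sc v₀ \ {v₀}) ∧
  (∀ v w wk k, G.lab v = .lam → G.Succ k w wk → wk ∈ Sc v \ {v} → w ∈ Sc v) ∧
  (∀ w, G.lab w = .var → ∃ v, G.lab v = .lam ∧ w ∈ Sc v \ {v}) ∧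
  (i = 1 → ∀ w w₀, G.lab w = .var → G.Succ 0 w w₀ →
      G.lab w₀ = .lam ∧ ∀ v, G.lab v = .lam → (w ∈ Sc v ↔ w₀ ∈ Sc v))

/-- λ-ho-term-graph over Σλ^i: a Σλ^i-term-graph endowed with a scope function. -/
structure LamHoTG (i : ℕ) (V : Type) extends TermGraph Lab3 (ar3 i) V where
  Sc : V → Set V
  conds : ScopeConds i toTermGraph Sc

/-- Correctness of an abstraction-prefix function for a Σλ^i-term-graph:
    (root), (λ), (@), (0)₀, and (for i = 1) (0)₁. -/
def CorrectAP (i : ℕ) {V : Type} (G : TermGraph Lab3 (ar3 i) V)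
    (P : V → List V) : Prop :=
  (P G.root = []) ∧
  (∀ w w₀, G.lab w = .lam → G.Succ 0 w w₀ → P w₀ <+: P w ++ [w]) ∧
  (∀ w wk k, G.lab w = .app → G.Succ k w wk → P wk <+: P w) ∧
  (∀ w, G.lab w = .var → P w ≠ []) ∧
  (i = 1 → ∀ w w₀, G.lab w = .var → G.Succ 0 w w₀ →
      G.lab w₀ = .lam ∧ P w₀ ++ [w₀] = P w)

/-- λ-ap-ho-term-graph over Σλ^i: a Σλ^i-term-graph endowed with a correct
    abstraction-prefix function. -/
structure LamApHoTG (i : ℕ) (V : Type) extends TermGraph Lab3 (ar3 i) V where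
  P : V → List V
  correct : CorrectAP i toTermGraph P

/-- `ScToP G Sc P` : the abstraction-prefix function `P` is the one obtained from the
    scope function `Sc` by the mapping A_i: for each vertex `w`, `P w` lists exactly
    the binders of `w` other than `w` itself, in order of strictly decreasing scopes. -/
def ScToP {i : ℕ} {V : Type} (G : TermGraph Lab3 (ar3 i) V)
    (Sc : V → Set V) (P : V → List V) : Prop :=
  ∀ w, (∀ v, v ∈ P w ↔ (G.lab v = .lam ∧ w ∈ Sc v ∧ v ≠ w)) ∧
    (P w).Chain' (fun a b => Sc b ⊂ Sc a)

/-- The scope function obtained from an abstraction-prefix function by the mapping B_i: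
    Sc(v) = { w | v occurs in P(w) } ∪ {v}. -/
def ScOfP {V : Type} (P : V → List V) : V → Set V :=
  fun v => {w | v ∈ P w} ∪ {v}

/-- Homomorphism of λ-ho-term-graphs (given by their underlying term graphs and
    scope functions). -/
def IsHoHom {i : ℕ} {V₁ V₂ : Type} (h : V₁ → V₂)
    (G₁ : TermGraph Lab3 (ar3 i) V₁) (Sc₁ : V₁ → Set V₁)
    (G₂ : TermGraph Lab3 (ar3 i) V₂) (Sc₂ : V₂ → Set V₂) : Prop :=
  IsHom h G₁ G₂ ∧ ∀ v, G₁.lab v = .lam → h '' Sc₁ v = Sc₂ (h v)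

/-- Homomorphism of λ-ap-ho-term-graphs (given by their underlying term graphs and
    abstraction-prefix functions). -/
def IsApHom {i : ℕ} {V₁ V₂ : Type} (h : V₁ → V₂)
    (G₁ : TermGraph Lab3 (ar3 i) V₁) (P₁ : V₁ → List V₁)
    (G₂ : TermGraph Lab3 (ar3 i) V₂) (P₂ : V₂ → List V₂) : Prop :=
  IsHom h G₁ G₂ ∧ ∀ v, (P₁ v).map h = P₂ (h v)

/-- Correctness of an abstraction-prefix function for a Σλ^{i,j}-term-graph:
    (root), (λ), (@), (0)₀, (0)₁ (for i = 1), (S)₁, and (S)₂ (for j = 2). -/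
def CorrectAP4 (i j : ℕ) {V : Type} (G : TermGraph Lab4 (ar4 i j) V)
    (P : V → List V) : Prop :=
  (P G.root = []) ∧
  (∀ w w₀, G.lab w = .lam → G.Succ 0 w w₀ → P w₀ = P w ++ [w]) ∧
  (∀ w wk k, G.lab w = .app → G.Succ k w wk → P wk = P w) ∧
  (∀ w, G.lab w = .var → P w ≠ []) ∧
  (i = 1 → ∀ w w₀, G.lab w = .var → G.Succ 0 w w₀ →
      G.lab w₀ = .lam ∧ P w₀ ++ [w₀] = P w) ∧
  (∀ w w₀, G.lab w = .del → G.Succ 0 w w₀ → ∃ v, P w₀ ++ [v] = P w) ∧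
  (j = 2 → ∀ w w₁, G.lab w = .del → G.Succ 1 w w₁ →
      G.lab w₁ = .lam ∧ P w₁ ++ [w₁] = P w)

/-- Vertex-set predicate of the construction G_i^j: original vertices (inl) together
    with scope-delimiter vertices (w, k, w', p) inserted along an edge w ↣_k w',
    one for each prefix p with P(w') < p ≤ P(w)·w (for λ-vertices w),
    resp. P(w') < p ≤ P(w) (for @-vertices w). -/
def GVP {i : ℕ} {V : Type} (G : TermGraph Lab3 (ar3 i) V) (P : V → List V) :
    V ⊕ (V × ℕ × V × List V) → Prop
  | .inl _ => True
  | .inr (w, k, w', p) =>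
      G.Succ k w w' ∧ P w' <+: p ∧ P w' ≠ p ∧
      ((G.lab w = .lam ∧ p <+: P w ++ [w]) ∨ (G.lab w = .app ∧ p <+: P w))

/-- Vertex set of the image of G_i^j. -/
def GVert {i : ℕ} {V : Type} (G : TermGraph Lab3 (ar3 i) V) (P : V → List V) : Type :=
  { x : V ⊕ (V × ℕ × V × List V) // GVP G P x }

/-- Labelling of the image of G_i^j: original labels on original vertices,
    `S` on the inserted delimiter vertices. -/
def GLab {i : ℕ} {V : Type} (G : TermGraph Lab3 (ar3 i) V) (P : V → List V)
    (x : GVert G P) : Lab4 :=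
  match x.val with
  | .inl w => lab3to4 (G.lab w)
  | .inr _ => .del

/-- The successor relation of the image of G_i^j (clauses as in the definition of
    the mapping G_i^j; for j = 2 the inserted S-vertices carry a 1-indexed back-link
    to the abstraction vertex whose extended scope they close). -/
def CSucc {i : ℕ} {V : Type} (j : ℕ) (G : TermGraph Lab3 (ar3 i) V) (P : V → List V)
    (k : ℕ) (x y : GVert G P) : Prop :=
  (∃ w wk, x.val = .inl w ∧ y.val = .inl wk ∧ G.Succ k w wk ∧
     (G.lab w = .var ∨ (G.lab w = .lam ∧ P wk = P w ++ [w]) ∨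
      (G.lab w = .app ∧ P wk = P w))) ∨
  (∃ w w₀, x.val = .inl w ∧ G.lab w = .lam ∧ G.Succ 0 w w₀ ∧ P w₀ ≠ P w ++ [w] ∧
     k = 0 ∧ y.val = .inr (w, 0, w₀, P w ++ [w])) ∨
  (∃ w wk, x.val = .inl w ∧ G.lab w = .app ∧ G.Succ k w wk ∧ P wk ≠ P w ∧
     y.val = .inr (w, k, wk, P w)) ∨
  (∃ w k' w' p v, x.val = .inr (w, k', w', p ++ [v]) ∧ k = 0 ∧ P w' ≠ p ∧
     y.val = .inr (w, k', w', p)) ∨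
  (∃ w k' w' v, x.val = .inr (w, k', w', P w' ++ [v]) ∧ k = 0 ∧ y.val = .inl w') ∨
  (j = 2 ∧ ∃ w k' w' p v, x.val = .inr (w, k', w', p ++ [v]) ∧ k = 1 ∧ y.val = .inl v)

/-- `IsGImage i j G P G'` : the Σλ^{i,j}-term-graph `G'` is the image of the
    λ-ap-ho-term-graph given by `G` and `P` under the mapping G_i^j. -/
def IsGImage (i j : ℕ) {V : Type} (G : TermGraph Lab3 (ar3 i) V) (P : V → List V)
    (G' : TermGraph Lab4 (ar4 i j) (GVert G P)) : Prop :=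
  (G'.root).val = .inl G.root ∧
  (∀ x, G'.lab x = GLab G P x) ∧
  (∀ k x y, G'.Succ k x y ↔ CSucc j G P k x y)

/-- One step along the 0-indexed edge of a scope-delimiter vertex. -/
def DelStep {i j : ℕ} {V : Type} (G : TermGraph Lab4 (ar4 i j) V) (a b : V) : Prop :=
  G.lab a = .del ∧ G.Succ 0 a b

/-- The non-delimiter vertices of a Σλ^{i,j}-term-graph. -/
def NVert {i j : ℕ} {V : Type} (G : TermGraph Lab4 (ar4 i j) V) : Type :=
  { v : V // G.lab v ≠ .del }

/-- `IsNImage i j G P G' P'` : the Σλ^i-term-graph `G'` with abstraction-prefix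
    function `P'` is the image of the λ-term-graph `G` (with correct prefix
    function `P`) under the mapping N_i^j: S-vertices are deleted, labels and the
    prefix function are restricted, the root is kept, and w₀ ↣'_k w₁ holds iff
    w₁ is reached from the k-th successor of w₀ by passing through finitely many
    S-vertices along their 0-indexed edges. -/
def IsNImage (i j : ℕ) {V : Type} (G : TermGraph Lab4 (ar4 i j) V) (P : V → List V)
    (G' : TermGraph Lab3 (ar3 i) (NVert G)) (P' : NVert G → List (NVert G)) : Prop :=
  (G'.root).val = G.root ∧
  (∀ x : NVert G, G'.lab x = lab4to3 (G.lab x.val)) ∧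
  (∀ k (a b : NVert G), G'.Succ k a b ↔
      ∃ u, G.Succ k a.val u ∧ Relation.ReflTransGen (DelStep G) u b.val) ∧
  (∀ v : NVert G, (P' v).map Subtype.val = P v.val)

/-- A λ-term-graph over Σλ^{1,2} (given by `G` with correct prefix function `P`) is
    fully back-linked if the last vertex of the abstraction prefix of any vertex `w`
    is reachable from `w`. -/
def FullyBackLinked {V : Type} (G : TermGraph Lab4 (ar4 1 2) V)
    (P : V → List V) : Prop :=
  ∀ w v p, P w = p ++ [v] → G.Reaches w v

/-- Eager-scope: whenever P(w) = p·v there is a path from `w` to `v` which ends with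
    a 0-indexed edge from a variable vertex to `v`, and all of whose intermediate
    vertices have abstraction prefixes extending P(w). -/
def EagerScope {V : Type} (G : TermGraph Lab4 (ar4 1 2) V)
    (P : V → List V) : Prop :=
  ∀ w v p, P w = p ++ [v] →
    ∃ (n : ℕ) (u : Fin (n + 1) → V),
      u 0 = w ∧
      (∀ m : Fin n, G.Edge (u m.castSucc) (u m.succ)) ∧
      G.Succ 0 (u (Fin.last n)) v ∧
      G.lab (u (Fin.last n)) = .var ∧
      ∀ m : Fin (n + 1), m ≠ 0 → P w <+: P (u m)


section AuxProofs

open List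

/-- Pure list lemma: a "downward-closed" subchain of a chain is a prefix. -/
theorem chain_prefix_aux {α : Type} {R : α → α → Prop}
    (htr : ∀ a b c, R a b → R b c → R a c) (hirr : ∀ a, ¬ R a a) :
    ∀ (l₂ l₁ : List α), l₁.Pairwise R → l₂.Pairwise R → (∀ a ∈ l₁, a ∈ l₂) →
      (∀ a ∈ l₂, ∀ b ∈ l₁, R a b → a ∈ l₁) → l₁ <+: l₂ := by
  intro l₂
  induction l₂ with
  | nil =>
    intro l₁ _ _ hsub _
    cases l₁ with
    | nil => exact prefix_rfl
    | cons a t => exact absurd (hsub a mem_cons_self) not_mem_nil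
  | cons b t₂ ih =>
    intro l₁ hp1 hp2 hsub hcl
    cases l₁ with
    | nil => exact nil_prefix
    | cons a t₁ =>
      obtain ⟨hRa, hp1'⟩ := pairwise_cons.1 hp1
      obtain ⟨hRb, hp2'⟩ := pairwise_cons.1 hp2
      have hab : a = b := by
        by_contra hne
        have hat2 : a ∈ t₂ := by
          rcases mem_cons.1 (hsub a mem_cons_self) with h | h
          · exact absurd h hne
          · exact h
        have hRba : R b a := hRb a hat2
        have hbl1 : b ∈ a :: t₁ :=
          hcl b mem_cons_self a mem_cons_self hRba
        rcases mem_cons.1 hbl1 with h | h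
        · exact hne h.symm
        · exact hirr b (htr _ _ _ hRba (hRa b h))
      subst hab
      have ht₁sub : ∀ x ∈ t₁, x ∈ t₂ := by
        intro x hx
        rcases mem_cons.1 (hsub x (mem_cons_of_mem _ hx)) with h | h
        · exact absurd (h ▸ hRa x hx) (hirr a)
        · exact h
      have hcl' : ∀ x ∈ t₂, ∀ y ∈ t₁, R x y → x ∈ t₁ := by
        intro x hx y hy hR
        rcases mem_cons.1 (hcl x (mem_cons_of_mem _ hx) y (mem_cons_of_mem _ hy) hR) with h | h
        · exact absurd (h ▸ hRb x hx) (hirr a)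
        · exact h
      exact cons_prefix_cons.2 ⟨rfl, ih t₁ hp1' hp2' ht₁sub hcl'⟩

theorem TermGraph.succ_lt {L V : Type} {ar : L → ℕ} (G : TermGraph L ar V)
    {k : ℕ} {w w' : V} (h : G.Succ k w w') : k < ar (G.lab w) := by
  have hk : k < (G.args w).length := (List.getElem?_eq_some_iff.1 h).1
  rwa [G.args_len w] at hk

theorem TermGraph.succ_of_edge {L V : Type} {ar : L → ℕ} (G : TermGraph L ar V)
    {w w' : V} (h : G.Edge w w') : ∃ k, G.Succ k w w' :=
  List.mem_iff_getElem?.1 h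

/-- Existence of a duplicate-free path from the root to any vertex. -/
theorem TermGraph.exists_nodup_path {L V : Type} {ar : L → ℕ} (G : TermGraph L ar V)
    (w : V) : ∃ l : List V, l.Chain' G.Edge ∧ l.head? = some G.root ∧
      l.getLast? = some w ∧ l.Nodup := by
  have h := G.reach w
  induction h with
  | refl => exact ⟨[G.root], List.isChain_singleton _, by simp, by simp, by simp⟩
  | @tail b c _ hbc ih =>
    obtain ⟨l, hch, hh, hl, hnd⟩ := ih
    have hbc' : G.Edge b c := hbc
    by_cases hcl : c ∈ l
    · obtain ⟨s, t, rfl⟩ := List.append_of_mem hcl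
      refine ⟨s ++ [c], hch.prefix ⟨t, by simp⟩, ?_, by simp, ?_⟩
      · rw [← hh]; simp
      · have hsl : s ++ [c] <+ s ++ c :: t := by
          have := List.sublist_append_left (s ++ [c]) t
          simpa using this
        exact hsl.nodup hnd
    · refine ⟨l ++ [c], ?_, ?_, by simp, ?_⟩
      · refine List.isChain_append.2 ⟨hch, by simp, ?_⟩
        intro x hx y hy
        simp only [head?_cons, Option.mem_def, Option.some.injEq] at hy
        rw [hl] at hx
        simp only [Option.mem_def, Option.some.injEq] at hx
        subst hx; subst hy; exact hbc'
      · have : l ≠ [] := by rintro rfl; simp at hl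
        rw [← hh]; cases l with
        | nil => simp at hl
        | cons a t => simp
      · simp only [List.nodup_append, List.nodup_cons]
        exact ⟨hnd, by simp, by simpa using fun a (ha : a ∈ l) (h : a = c) => hcl (h ▸ ha)⟩

section Scopes

variable {i : ℕ} {V : Type} {G : TermGraph Lab3 (ar3 i) V} {Sc : V → Set V}

theorem scope_ssubset (hc : ScopeConds i G Sc) {a b : V}
    (ha : G.lab a = .lam) (hb : G.lab b = .lam)
    (hmem : b ∈ Sc a) (hne : b ≠ a) : Sc b ⊂ Sc a := by
  obtain ⟨_, hself, hnest, _⟩ := hc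
  have hsub : Sc b ⊆ Sc a \ {a} := hnest a b ha hb ⟨hmem, by simp [hne]⟩
  constructor
  · exact hsub.trans Set.diff_subset
  · intro hcon
    have : a ∈ Sc a \ {a} := hsub (hcon (hself a ha))
    simp at this

theorem binder_decomp (hc : ScopeConds i G Sc) {v w : V} (hv : G.lab v = .lam)
    (hw : w ∈ Sc v ∧ w ≠ v) :
    ∀ l : List V, l.Chain' G.Edge → l.getLast? = some w →
      (∀ u ∈ l, u ∈ Sc v ∧ u ≠ v) ∨
        ∃ s t, l = s ++ v :: t ∧ ∀ u ∈ t, u ∈ Sc v ∧ u ≠ v := by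
  intro l
  induction l with
  | nil => intro _ h; simp at h
  | cons x xs ih =>
    intro hch hlast
    cases xs with
    | nil =>
      have hx : x = w := by simpa using hlast
      subst hx
      exact Or.inl (by simpa using hw)
    | cons y rest =>
      have hedge : G.Edge x y := (List.isChain_cons_cons.1 hch).1
      have hch' := (List.isChain_cons_cons.1 hch).2
      have hlast' : (y :: rest).getLast? = some w := by
        rw [← hlast]; simp [List.getLast?_cons_cons]
      rcases ih hch' hlast' with hall | ⟨s, t, heq, ht⟩
      · obtain ⟨k, hk⟩ := G.succ_of_edge hedge
        have hy := hall y mem_cons_self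
        have hx : x ∈ Sc v := hc.2.2.2.1 v x y k hv hk ⟨hy.1, by simp [hy.2]⟩
        by_cases hxv : x = v
        · exact Or.inr ⟨[], y :: rest, by simp [hxv], hall⟩
        · refine Or.inl ?_
          intro u hu
          rcases mem_cons.1 hu with h | h
          · exact ⟨h ▸ hx, h ▸ hxv⟩
          · exact hall u h
      · exact Or.inr ⟨x :: s, t, by rw [heq]; rfl, ht⟩

theorem binder_mem_path (hc : ScopeConds i G Sc) {v w : V} (hv : G.lab v = .lam)
    (hw : w ∈ Sc v ∧ w ≠ v) {l : List V} (hch : l.Chain' G.Edge)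
    (hhead : l.head? = some G.root) (hlast : l.getLast? = some w) :
    ∃ s t, l = s ++ v :: t ∧ ∀ u ∈ t, u ∈ Sc v ∧ u ≠ v := by
  rcases binder_decomp hc hv hw l hch hlast with hall | h
  · exfalso
    have hr : G.root ∈ l := List.mem_of_mem_head? (by rw [hhead]; rfl)
    have h2 := hall _ hr
    exact hc.1 v hv ⟨h2.1, by simp [h2.2]⟩
  · exact h

theorem path_pairwise (hc : ScopeConds i G Sc) (w : V)
    {l : List V} (hch : l.Chain' G.Edge) (hhead : l.head? = some G.root)
    (hlast : l.getLast? = some w) (hnd : l.Nodup) :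
    l.Pairwise (fun a b => (G.lab a = .lam ∧ w ∈ Sc a ∧ a ≠ w) →
      (G.lab b = .lam ∧ w ∈ Sc b ∧ b ≠ w) → Sc b ⊂ Sc a) := by
  rw [List.pairwise_iff_forall_sublist]
  intro a b hsub hBa hBb
  obtain ⟨s, t, heq, ht⟩ := binder_mem_path hc hBa.1 ⟨hBa.2.1, fun h => hBa.2.2 h.symm⟩
    hch hhead hlast
  subst heq
  have has : a ∉ s := by
    intro hmem
    exact (List.disjoint_of_nodup_append hnd) hmem mem_cons_self
  have hat : a ∉ t := by
    have := (List.nodup_append.1 hnd).2.1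
    exact (List.nodup_cons.1 this).1
  have hbt : b ∈ t := by
    rcases List.sublist_append_iff.1 hsub with ⟨u1, u2, hsplit, hu1, hu2⟩
    have hu1nil : u1 = [] := by
      cases u1 with
      | nil => rfl
      | cons z zs =>
        exfalso
        have hz : z = a := by
          have := congrArg (·.head?) hsplit
          simpa using this.symm
        exact has (hu1.subset (hz ▸ mem_cons_self (a := z) (l := zs)))
    subst hu1nil
    simp only [List.nil_append] at hsplit
    rw [← hsplit] at hu2
    cases hu2 with
    | cons _ h => exact absurd (h.subset (mem_cons_self (a := a) (l := [b]))) hat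
    | cons_cons _ h => exact h.subset (mem_cons_self (a := b) (l := []))
  have hba := ht b hbt
  exact scope_ssubset hc hBa.1 hBb.1 hba.1 hba.2

theorem ssubset_trans' : ∀ a b c : V, Sc b ⊂ Sc a → Sc c ⊂ Sc b → Sc c ⊂ Sc a :=
  fun _ _ _ h1 h2 => h2.trans h1

/-- Existence half of the mapping A_i : the binder-listing prefix function exists. -/
theorem scToP_exists (G : LamHoTG i V) : ∃ P : V → List V, ScToP G.toTermGraph G.Sc P := by
  classical
  have hpaths := G.toTermGraph.exists_nodup_path
  choose pl hch hh hl hnd using hpaths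
  refine ⟨fun w => (pl w).filter
    (fun v => decide (G.lab v = .lam ∧ w ∈ G.Sc v ∧ v ≠ w)), fun w => ⟨?_, ?_⟩⟩
  · intro v
    rw [List.mem_filter, decide_eq_true_iff]
    constructor
    · exact fun h => h.2
    · intro h
      refine ⟨?_, h⟩
      obtain ⟨s, t, heq, _⟩ := binder_mem_path G.conds h.1
        ⟨h.2.1, fun he => h.2.2 he.symm⟩ (hch w) (hh w) (hl w)
      rw [heq]; exact List.mem_append_right _ mem_cons_self
  · have hpw := path_pairwise G.conds w (hch w) (hh w) (hl w) (hnd w)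
    have hpf := List.Pairwise.sublist
      (List.filter_sublist (p := fun v => decide (G.lab v = .lam ∧ w ∈ G.Sc v ∧ v ≠ w)) (l := pl w)) hpw
    refine List.Pairwise.isChain (List.Pairwise.imp_of_mem ?_ hpf)
    intro a b hma hmb h
    rw [List.mem_filter, decide_eq_true_iff] at hma hmb
    exact h hma.2 hmb.2

/-- Basic facts about any `P` satisfying `ScToP`. -/
theorem scToP_pairwise {G : TermGraph Lab3 (ar3 i) V} {Sc : V → Set V} {P : V → List V}
    (hP : ScToP G Sc P) (w : V) :
    (P w).Pairwise (fun a b => Sc b ⊂ Sc a) := by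
  haveI : IsTrans V (fun a b : V => Sc b ⊂ Sc a) := ⟨fun _ _ _ h1 h2 => h2.trans h1⟩
  exact List.isChain_iff_pairwise.1 (hP w).2

theorem scToP_upclosed {G : TermGraph Lab3 (ar3 i) V}
    (hc : ScopeConds i G Sc) {P : V → List V}
    (hP : ScToP G Sc P) {x a b : V} (hb : b ∈ P x) (ha : G.lab a = .lam)
    (hss : Sc b ⊂ Sc a) : a ∈ P x := by
  obtain ⟨hbl, hbx, hbnex⟩ := ((hP x).1 b).1 hb
  have hba : b ∈ Sc a := hss.1 (hc.2.1 b hbl)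
  have hbnea : b ≠ a := fun h => (ssubset_irrefl _) (h ▸ hss)
  have hsub : Sc b ⊆ Sc a \ {a} := hc.2.2.1 a b ha hbl ⟨hba, by simp [hbnea]⟩
  have hxa := hsub hbx
  refine ((hP x).1 a).2 ⟨ha, hxa.1, ?_⟩
  intro h
  rw [h] at hxa
  simp at hxa

theorem scToP_pairwise_concat {G : TermGraph Lab3 (ar3 i) V}
    (hc : ScopeConds i G Sc) {P : V → List V}
    (hP : ScToP G Sc P) {w : V} (hw : G.lab w = .lam) :
    (P w ++ [w]).Pairwise (fun a b => Sc b ⊂ Sc a) := by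
  rw [List.pairwise_append]
  refine ⟨scToP_pairwise hP w, by simp, ?_⟩
  intro a ha b hb
  obtain ⟨hal, hwa, hanew⟩ := ((hP w).1 a).1 ha
  have hb' : b = w := by simpa using hb
  subst hb'
  exact scope_ssubset hc hal hw hwa (fun h => hanew h.symm)

/-- Correctness half of the mapping A_i. -/
theorem scToP_correct (hi : i = 0 ∨ i = 1) (G : LamHoTG i V)
    (P : V → List V) (hP : ScToP G.toTermGraph G.Sc P) :
    CorrectAP i G.toTermGraph P := by
  have hc := G.conds
  obtain ⟨hroot, hself, hnest, hclosed, hsc0, hsc1⟩ := hc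
  have hc' := G.conds
  have hmem : ∀ w v, v ∈ P w ↔ (G.lab v = .lam ∧ w ∈ G.Sc v ∧ v ≠ w) :=
    fun w => (hP w).1
  have htr : ∀ a b c : V, G.Sc b ⊂ G.Sc a → G.Sc c ⊂ G.Sc b → G.Sc c ⊂ G.Sc a :=
    fun _ _ _ h1 h2 => h2.trans h1
  have hirr : ∀ a : V, ¬ G.Sc a ⊂ G.Sc a := fun a => ssubset_irrefl _
  refine ⟨?_, ?_, ?_, ?_, ?_⟩
  · -- (root)
    rw [List.eq_nil_iff_forall_not_mem]
    intro v hv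
    obtain ⟨hvl, hrv, hvne⟩ := (hmem _ v).1 hv
    exact hroot v hvl ⟨hrv, by simp; exact fun h => hvne h.symm⟩
  · -- (λ)
    intro w w₀ hwl hsucc
    refine chain_prefix_aux htr hirr _ _ (scToP_pairwise hP w₀)
      (scToP_pairwise_concat hc' hP hwl) ?_ ?_
    · intro v hv
      obtain ⟨hvl, hv0, hvne⟩ := (hmem _ v).1 hv
      have hwv : w ∈ G.Sc v := hclosed v w w₀ 0 hvl hsucc ⟨hv0, by simp; exact fun h => hvne h.symm⟩
      by_cases hvw : v = w
      · exact List.mem_append_right _ (by simp [hvw])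
      · exact List.mem_append_left _ ((hmem w v).2 ⟨hvl, hwv, hvw⟩)
    · intro a ha b hb hss
      have hal : G.lab a = .lam := by
        rcases List.mem_append.1 ha with h | h
        · exact ((hmem w a).1 h).1
        · have : a = w := by simpa using h
          exact this ▸ hwl
      exact scToP_upclosed hc' hP hb hal hss
  · -- (@)
    intro w wk k hwl hsucc
    refine chain_prefix_aux htr hirr _ _ (scToP_pairwise hP wk) (scToP_pairwise hP w) ?_ ?_
    · intro v hv
      obtain ⟨hvl, hv0, hvne⟩ := (hmem _ v).1 hv
      have hwv : w ∈ G.Sc v :=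
        hclosed v w wk k hvl hsucc ⟨hv0, by simp; exact fun h => hvne h.symm⟩
      refine (hmem w v).2 ⟨hvl, hwv, ?_⟩
      intro h
      rw [h, hwl] at hvl
      exact Lab3.noConfusion hvl
    · intro a ha b hb hss
      exact scToP_upclosed hc' hP hb (((hmem w a).1 ha).1) hss
  · -- (0)₀
    intro w hwv
    obtain ⟨v, hvl, hv⟩ := hsc0 w hwv
    have : v ∈ P w := (hmem w v).2 ⟨hvl, hv.1, fun h => by simp [h] at hv⟩
    exact List.ne_nil_of_mem this
  · -- (0)₁
    intro hione w w₀ hwv hsucc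
    obtain ⟨hw0l, hiff⟩ := hsc1 hione w w₀ hwv hsucc
    refine ⟨hw0l, ?_⟩
    have hmemeq : ∀ x, x ∈ P w₀ ++ [w₀] ↔ x ∈ P w := by
      intro x
      constructor
      · intro hx
        rcases List.mem_append.1 hx with h | h
        · obtain ⟨hxl, hx0, hxne⟩ := (hmem _ x).1 h
          refine (hmem w x).2 ⟨hxl, (hiff x hxl).2 hx0, ?_⟩
          intro he
          rw [he, hwv] at hxl
          exact Lab3.noConfusion hxl
        · have hxw : x = w₀ := by simpa using h
          subst hxw
          refine (hmem w x).2 ⟨hw0l, (hiff x hw0l).2 (hself x hw0l), ?_⟩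
          intro he
          rw [he, hwv] at hw0l
          exact Lab3.noConfusion hw0l
      · intro hx
        obtain ⟨hxl, hxw, hxne⟩ := (hmem _ x).1 hx
        by_cases hxw0 : x = w₀
        · exact List.mem_append_right _ (by simp [hxw0])
        · exact List.mem_append_left _
            ((hmem w₀ x).2 ⟨hxl, (hiff x hxl).1 hxw, hxw0⟩)
    have h1 : P w₀ ++ [w₀] <+: P w :=
      chain_prefix_aux htr hirr _ _ (scToP_pairwise_concat hc' hP hw0l)
        (scToP_pairwise hP w) (fun a ha => (hmemeq a).1 ha)
        (fun a ha b _ _ => (hmemeq a).2 ha)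
    have h2 : P w <+: P w₀ ++ [w₀] :=
      chain_prefix_aux htr hirr _ _ (scToP_pairwise hP w)
        (scToP_pairwise_concat hc' hP hw0l) (fun a ha => (hmemeq a).2 ha)
        (fun a ha b _ _ => (hmemeq a).1 ha)
    exact h1.sublist.antisymm h2.sublist

end Scopes

section APtoSc

variable {i : ℕ} {V : Type}

theorem mem_scOfP (P : V → List V) (v w : V) : w ∈ ScOfP P v ↔ v ∈ P w ∨ w = v := by
  simp only [ScOfP, Set.mem_union, Set.mem_setOf_eq, Set.mem_singleton_iff]

/-- The key invariant of correct abstraction-prefix functions. -/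
theorem apInv (hi : i = 0 ∨ i = 1) (G : LamApHoTG i V) :
    ∀ w q v r, G.P w = q ++ v :: r → G.lab v = Lab3.lam ∧ G.P v = q := by
  obtain ⟨hroot, hlam, happ, hvar, hvar1⟩ := G.correct
  intro w
  have h := G.reach w
  induction h with
  | refl =>
    intro q v r hq
    rw [hroot] at hq
    exact absurd hq.symm (List.append_ne_nil_of_right_ne_nil _ (by simp))
  | @tail b c _ hbc ih =>
    intro q v r hq
    obtain ⟨k, hk⟩ := G.toTermGraph.succ_of_edge hbc
    have htrans : G.P c <+: G.P b → G.lab v = Lab3.lam ∧ G.P v = q := by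
      intro hpre
      obtain ⟨r', hr'⟩ := hpre
      exact ih q v (r ++ r') (by rw [← hr', hq]; simp)
    cases hlb : G.lab b with
    | app => exact htrans (happ b c k hlb hk)
    | lam =>
      have hk0 : k = 0 := by
        have := G.toTermGraph.succ_lt hk
        rw [hlb] at this
        simp [ar3] at this
        omega
      subst hk0
      have hpre := hlam b c hlb hk
      have hqc : q ++ [v] <+: G.P c := ⟨r, by rw [hq]; simp⟩
      have hqv : q ++ [v] <+: G.P b ++ [b] := hqc.trans hpre
      have hqlen : q.length + 1 ≤ (G.P b).length + 1 := by
        have := hqv.length_le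
        simpa using this
      by_cases hlen : q.length + 1 ≤ (G.P b).length
      · have : q ++ [v] <+: G.P b :=
          List.prefix_of_prefix_length_le hqv (List.prefix_append _ _) (by simpa using hlen)
        obtain ⟨r', hr'⟩ := this
        exact ih q v r' (by rw [← hr']; simp)
      · have hqeq : q.length = (G.P b).length := by omega
        have hq1 : q <+: G.P b ++ [b] := (List.prefix_append q [v]).trans hqv
        have hq2 : q = G.P b :=
          (List.prefix_of_prefix_length_le hq1 (List.prefix_append _ _) (le_of_eq hqeq)).eq_of_length hqeq
        have hv : q ++ [v] = G.P b ++ [b] :=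
          hqv.eq_of_length (by simp [hqeq])
        rw [← hq2] at hv
        have hvb : v = b := by
          have := List.append_cancel_left hv
          simpa using this
        subst hvb
        exact ⟨hlb, hq2.symm⟩
    | var =>
      rcases hi with hi0 | hi1
      · exfalso
        have := G.toTermGraph.succ_lt hk
        rw [hlb] at this
        subst hi0
        simp [ar3] at this
      · have hk0 : k = 0 := by
          have := G.toTermGraph.succ_lt hk
          rw [hlb] at this
          subst hi1
          simp [ar3] at this
          omega
        subst hk0
        obtain ⟨_, heq⟩ := hvar1 hi1 b c hlb hk
        exact htrans ⟨[c], heq⟩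

theorem scOfP_not_self_mem (hi : i = 0 ∨ i = 1) (G : LamApHoTG i V) (w : V) :
    w ∉ G.P w := by
  intro hw
  obtain ⟨q, r, hqr⟩ := List.append_of_mem hw
  have h2 := (apInv hi G w q w r hqr).2
  have := congrArg List.length hqr
  rw [h2] at this
  simp at this

/-- Well-definedness of the mapping B_i. -/
theorem scOfP_conds (hi : i = 0 ∨ i = 1) (G : LamApHoTG i V) :
    ScopeConds i G.toTermGraph (ScOfP G.P) := by
  obtain ⟨hroot, hlam, happ, hvar, hvar1⟩ := G.correct
  have hInv := apInv hi G
  have hns := scOfP_not_self_mem hi G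
  refine ⟨?_, ?_, ?_, ?_, ?_, ?_⟩
  · -- (root)
    intro v hv hmem
    obtain ⟨h1, h2⟩ := hmem
    rcases (mem_scOfP _ _ _).1 h1 with h | h
    · rw [hroot] at h; exact List.not_mem_nil h
    · exact h2 (by simpa using h)
  · -- (self)
    intro v _
    exact (mem_scOfP _ _ _).2 (Or.inr rfl)
  · -- (nest)
    intro v₀ v₁ h₀ h₁ hmem
    have hv01 : v₀ ∈ G.P v₁ := by
      rcases (mem_scOfP _ _ _).1 hmem.1 with h | h
      · exact h
      · exact absurd (by simpa using h) (by simpa using hmem.2)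
    intro w hw
    rcases (mem_scOfP _ _ _).1 hw with h | h
    · obtain ⟨q, r, hqr⟩ := List.append_of_mem h
      have hq := (hInv w q v₁ r hqr).2
      have hv0q : v₀ ∈ q := hq ▸ hv01
      have hv0w : v₀ ∈ G.P w := by rw [hqr]; exact List.mem_append_left _ hv0q
      refine ⟨(mem_scOfP _ _ _).2 (Or.inl hv0w), ?_⟩
      simp only [Set.mem_singleton_iff]
      intro hwv0
      exact hns v₀ (hwv0 ▸ hv0w)
    · exact h ▸ hmem
  · -- (closed)
    intro v w wk k hv hsucc hwk
    have hvwk : v ∈ G.P wk := by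
      rcases (mem_scOfP _ _ _).1 hwk.1 with h | h
      · exact h
      · exact absurd (by simpa using h) (by simpa using hwk.2)
    cases hlw : G.lab w with
    | app =>
      have hpre := happ w wk k hlw hsucc
      exact (mem_scOfP _ _ _).2 (Or.inl (hpre.sublist.subset hvwk))
    | lam =>
      have hk0 : k = 0 := by
        have := G.toTermGraph.succ_lt hsucc
        rw [hlw] at this
        simp [ar3] at this
        omega
      subst hk0
      have hpre := hlam w wk hlw hsucc
      have := hpre.sublist.subset hvwk
      rcases List.mem_append.1 this with h | h
      · exact (mem_scOfP _ _ _).2 (Or.inl h)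
      · have hwv : v = w := by simpa using h
        exact (mem_scOfP _ _ _).2 (Or.inr hwv.symm)
    | var =>
      rcases hi with hi0 | hi1
      · exfalso
        have := G.toTermGraph.succ_lt hsucc
        rw [hlw] at this
        subst hi0
        simp [ar3] at this
      · have hk0 : k = 0 := by
          have := G.toTermGraph.succ_lt hsucc
          rw [hlw] at this
          subst hi1
          simp [ar3] at this
          omega
        subst hk0
        obtain ⟨_, heq⟩ := hvar1 hi1 w wk hlw hsucc
        refine (mem_scOfP _ _ _).2 (Or.inl ?_)
        rw [← heq]
        exact List.mem_append_left _ hvwk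
  · -- (scope)₀
    intro w hw
    have hne := hvar w hw
    rcases List.eq_nil_or_concat (G.P w) with h | ⟨q, v, hqv⟩
    · exact absurd h hne
    · rw [List.concat_eq_append] at hqv
      have hlv := (hInv w q v [] (by simpa using hqv)).1
      refine ⟨v, hlv, ⟨(mem_scOfP _ _ _).2 (Or.inl ?_), ?_⟩⟩
      · rw [hqv]; exact List.mem_append_right _ (by simp)
      · simp only [Set.mem_singleton_iff]
        intro hwv
        refine hns v ?_
        rw [← hwv, hqv]
        exact hwv ▸ (List.mem_append_right _ (by simp))
  · -- (scope)₁
    intro hione w w₀ hw hsucc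
    obtain ⟨hl0, heq⟩ := hvar1 hione w w₀ hw hsucc
    refine ⟨hl0, ?_⟩
    intro v hv
    constructor
    · intro hmem
      rcases (mem_scOfP _ _ _).1 hmem with h | h
      · rw [← heq] at h
        rcases List.mem_append.1 h with h' | h'
        · exact (mem_scOfP _ _ _).2 (Or.inl h')
        · have hv0 : v = w₀ := by simpa using h'
          exact (mem_scOfP _ _ _).2 (Or.inr hv0.symm)
      · exfalso
        rw [h, hv] at hw
        exact Lab3.noConfusion hw
    · intro hmem
      rcases (mem_scOfP _ _ _).1 hmem with h | h
      · refine (mem_scOfP _ _ _).2 (Or.inl ?_)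
        rw [← heq]
        exact List.mem_append_left _ h
      · refine (mem_scOfP _ _ _).2 (Or.inl ?_)
        rw [← heq, ← h]
        exact List.mem_append_right _ (by simp)
  
end APtoSc

end AuxProofs

/-- Proposition 3.3: the mappings A_i (from scope functions to abstraction-prefix
    functions) and B_i (from abstraction-prefix functions to scope functions) are
    well-defined between λ-ho-term-graphs and λ-ap-ho-term-graphs over Σλ^i:
    for every λ-ho-term-graph the abstraction-prefix function listing the binders in
    order of strictly decreasing scopes exists and is correct, and for every
    λ-ap-ho-term-graph the scope function Sc(v) = {w | v occurs in P(w)} ∪ {v}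
    satisfies the scope-function conditions. -/
theorem lhotg_laphotg_mappings_well_defined :
    ∀ i ∈ ({0, 1} : Set ℕ), ∀ (V : Type),
      (∀ G : LamHoTG i V,
        (∃ P : V → List V, ScToP G.toTermGraph G.Sc P) ∧
        (∀ P : V → List V, ScToP G.toTermGraph G.Sc P →
          CorrectAP i G.toTermGraph P)) ∧
      (∀ G : LamApHoTG i V, ScopeConds i G.toTermGraph (ScOfP G.P)) := by
  intro i hi V
  have hi' : i = 0 ∨ i = 1 := by simpa using hi
  exact ⟨fun G => ⟨scToP_exists G, fun P hP => scToP_correct hi' G P hP⟩,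
    fun G => scOfP_conds hi' G⟩
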